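/- arXiv:2504.00411 — 3 statements merged into one kernel-verified Lean document; each statement's English description precedes it below -/
import Mathlib

section
/- If a randomized mechanism M satisfies (α, γ)-Rényi differential privacy for some α > 1, then for any 0 < δ < 1, M satisfies (ε, δ)-differential privacy with ε = γ + ln(1/δ)/(α−1). That is, for any adjacent inputs D, D' and measurable set S, Pr[M(D) ∈ S] ≤ e^ε · Pr[M(D') ∈ S] + δ. -/
open MeasureTheory Real

/-- RDP to DP conversion: if a mechanism (given by densities `p D` w.r.t. `μ`)
satisfies `(α, γ)`-Rényi differential privacy, then it satisfies
`(γ + ln(1/δ)/(α-1), δ)`-differential privacy for any `0 < δ < 1`. -/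
theorem rdp_to_dp {Ω Data : Type*} [MeasurableSpace Ω] (μ : Measure Ω)
    (adj : Data → Data → Prop) (p : Data → Ω → ℝ)
    (hpos : ∀ D x, 0 < p D x) (hmeas : ∀ D, Measurable (p D))
    (hnorm : ∀ D, ∫ x, p D x ∂μ = 1)
    (α γ : ℝ) (hα : 1 < α)
    (hint : ∀ D D', adj D D' →
      Integrable (fun x => (p D x / p D' x) ^ α * p D' x) μ)
    (hRDP : ∀ D D', adj D D' →
      (α - 1)⁻¹ * Real.log (∫ x, (p D x / p D' x) ^ α * p D' x ∂μ) ≤ γ)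
    (δ : ℝ) (hδ0 : 0 < δ) (hδ1 : δ < 1) :
    ∀ D D', adj D D' → ∀ S : Set Ω, MeasurableSet S →
      ∫ x in S, p D x ∂μ ≤
        Real.exp (γ + Real.log (1 / δ) / (α - 1)) * ∫ x in S, p D' x ∂μ + δ := by
  intro D D' hadj S hS
  set ε : ℝ := γ + Real.log (1 / δ) / (α - 1) with hε
  have hα1 : (0:ℝ) < α - 1 := by linarith
  have hpD : Integrable (p D) μ := integrable_of_integral_eq_one (hnorm D)
  have hpD' : Integrable (p D') μ := integrable_of_integral_eq_one (hnorm D')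
  have hg : Integrable (fun x => (p D x / p D' x) ^ α * p D' x) μ := hint D D' hadj
  set g : Ω → ℝ := fun x => (p D x / p D' x) ^ α * p D' x with hgdef
  have hgnn : ∀ x, 0 ≤ g x := fun x =>
    mul_nonneg (Real.rpow_nonneg (div_nonneg (hpos D x).le (hpos D' x).le) _) (hpos D' x).le
  set T : Set Ω := {x | Real.exp ε * p D' x < p D x} with hT
  have hTm : MeasurableSet T :=
    measurableSet_lt (((hmeas D').const_mul _)) (hmeas D)
  -- integral bound from RDP
  have hI : ∫ x, g x ∂μ ≤ Real.exp (γ * (α - 1)) := by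
    rcases le_or_gt (∫ x, g x ∂μ) 0 with h | h
    · exact h.trans (Real.exp_pos _).le
    · have := hRDP D D' hadj
      have hlog : Real.log (∫ x, g x ∂μ) ≤ γ * (α - 1) := by
        rw [inv_mul_le_iff₀ hα1] at this
        linarith [this]
      calc ∫ x, g x ∂μ = Real.exp (Real.log (∫ x, g x ∂μ)) := (Real.exp_log h).symm
        _ ≤ Real.exp (γ * (α - 1)) := Real.exp_le_exp.mpr hlog
  -- pointwise bound on T
  have hpt : ∀ x ∈ T, p D x ≤ Real.exp (-(ε * (α - 1))) * g x := by
    intro x hx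
    have hq := hpos D' x
    have hr : Real.exp ε < p D x / p D' x := (lt_div_iff₀ hq).mpr hx
    have hrpos : (0:ℝ) < p D x / p D' x := (Real.exp_pos ε).trans hr
    have key : Real.exp (ε * (α - 1)) * p D x ≤ g x := by
      have h1 : (p D x / p D' x) ^ α = (p D x / p D' x) ^ (α - 1) * (p D x / p D' x) := by
        rw [← Real.rpow_add_one (ne_of_gt hrpos)]
        ring_nf
      have h2 : Real.exp (ε * (α - 1)) ≤ (p D x / p D' x) ^ (α - 1) := by
        rw [Real.exp_mul]
        exact Real.rpow_le_rpow (Real.exp_pos _).le hr.le hα1.le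
      have h3 : (p D x / p D' x) * p D' x = p D x := div_mul_cancel₀ _ (ne_of_gt hq)
      calc Real.exp (ε * (α - 1)) * p D x
          ≤ (p D x / p D' x) ^ (α - 1) * p D x :=
            mul_le_mul_of_nonneg_right h2 (hpos D x).le
        _ = g x := by rw [hgdef]; simp only []; rw [h1, mul_assoc, h3]
    have := mul_le_mul_of_nonneg_left key (Real.exp_pos (-(ε * (α - 1)))).le
    rwa [← mul_assoc, ← Real.exp_add, neg_add_cancel, Real.exp_zero, one_mul] at this
  -- bound on S ∩ T part
  have hbound1 : ∫ x in S ∩ T, p D x ∂μ ≤ δ := by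
    have step1 : ∫ x in S ∩ T, p D x ∂μ ≤ ∫ x in S ∩ T, Real.exp (-(ε * (α - 1))) * g x ∂μ := by
      apply setIntegral_mono_on hpD.integrableOn ((hg.const_mul _).integrableOn)
        (hS.inter hTm)
      intro x hx; exact hpt x hx.2
    have step2 : ∫ x in S ∩ T, Real.exp (-(ε * (α - 1))) * g x ∂μ
        = Real.exp (-(ε * (α - 1))) * ∫ x in S ∩ T, g x ∂μ := by
      rw [integral_const_mul]
    have step3 : ∫ x in S ∩ T, g x ∂μ ≤ ∫ x, g x ∂μ :=
      setIntegral_le_integral hg (Filter.Eventually.of_forall hgnn)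
    have step4 : Real.exp (-(ε * (α - 1))) * ∫ x in S ∩ T, g x ∂μ
        ≤ Real.exp (-(ε * (α - 1))) * Real.exp (γ * (α - 1)) :=
      mul_le_mul_of_nonneg_left (step3.trans hI) (Real.exp_pos _).le
    have harith : Real.exp (-(ε * (α - 1))) * Real.exp (γ * (α - 1)) = δ := by
      rw [← Real.exp_add]
      have : -(ε * (α - 1)) + γ * (α - 1) = Real.log δ := by
        rw [hε]
        have : Real.log (1 / δ) = -Real.log δ := by
          rw [one_div, Real.log_inv]
        field_simp
        rw [this]; ring
      rw [this, Real.exp_log hδ0]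
    linarith [step1, step2 ▸ step1, step4]
  -- bound on S \ T part
  have hbound2 : ∫ x in S \ T, p D x ∂μ ≤ Real.exp ε * ∫ x in S, p D' x ∂μ := by
    have step1 : ∫ x in S \ T, p D x ∂μ ≤ ∫ x in S \ T, Real.exp ε * p D' x ∂μ := by
      apply setIntegral_mono_on hpD.integrableOn ((hpD'.const_mul _).integrableOn)
        (hS.diff hTm)
      intro x hx
      have : ¬ (Real.exp ε * p D' x < p D x) := hx.2
      linarith [not_lt.mp this]
    have step2 : ∫ x in S \ T, Real.exp ε * p D' x ∂μ
        = Real.exp ε * ∫ x in S \ T, p D' x ∂μ := integral_const_mul _ _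
    have step3 : ∫ x in S \ T, p D' x ∂μ ≤ ∫ x in S, p D' x ∂μ := by
      apply setIntegral_mono_set hpD'.integrableOn
        (Filter.Eventually.of_forall (fun x => (hpos D' x).le))
        (Filter.Eventually.of_forall Set.diff_subset)
    calc ∫ x in S \ T, p D x ∂μ ≤ Real.exp ε * ∫ x in S \ T, p D' x ∂μ := by
          rw [← step2]; exact step1
      _ ≤ Real.exp ε * ∫ x in S, p D' x ∂μ :=
          mul_le_mul_of_nonneg_left step3 (Real.exp_pos _).le
  have hsplit : ∫ x in S ∩ T, p D x ∂μ + ∫ x in S \ T, p D x ∂μ = ∫ x in S, p D x ∂μ :=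
    integral_inter_add_diff hTm hpD.integrableOn
  linarith [hsplit, hbound1, hbound2]
end

section
/- If mechanisms M₁ and M₂ each satisfy (α, γ₁)-RDP and (α, γ₂)-RDP respectively (with M₂ possibly depending on the output of M₁ in an adaptive composition), then the composed mechanism (M₁, M₂) satisfies (α, γ₁ + γ₂)-RDP. -/
open MeasureTheory Real

set_option maxHeartbeats 1000000 in
/-- Adaptive composition of Rényi differential privacy: if `M₁` (densities `p₁ D` on `Ω₁`)
satisfies `(α, γ₁)`-RDP and, for every possible first output `ω₁`, the adaptive second
mechanism `M₂` (densities `p₂ D ω₁` on `Ω₂`) satisfies `(α, γ₂)`-RDP, then the composed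
mechanism with density `(ω₁, ω₂) ↦ p₁ D ω₁ * p₂ D ω₁ ω₂` satisfies `(α, γ₁ + γ₂)`-RDP. -/
theorem rdp_adaptive_composition {Ω₁ Ω₂ Data : Type*}
    [MeasurableSpace Ω₁] [MeasurableSpace Ω₂]
    (μ₁ : Measure Ω₁) (μ₂ : Measure Ω₂) [SigmaFinite μ₁] [SigmaFinite μ₂]
    (adj : Data → Data → Prop)
    (p₁ : Data → Ω₁ → ℝ) (p₂ : Data → Ω₁ → Ω₂ → ℝ)
    (hpos₁ : ∀ D x, 0 < p₁ D x) (hpos₂ : ∀ D x y, 0 < p₂ D x y)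
    (hmeas₁ : ∀ D, Measurable (p₁ D))
    (hmeas₂ : ∀ D, Measurable (Function.uncurry (p₂ D)))
    (hnorm₁ : ∀ D, ∫ x, p₁ D x ∂μ₁ = 1)
    (hnorm₂ : ∀ D x, ∫ y, p₂ D x y ∂μ₂ = 1)
    (α γ₁ γ₂ : ℝ) (hα : 1 < α)
    (hint₁ : ∀ D D', adj D D' →
      Integrable (fun x => (p₁ D x / p₁ D' x) ^ α * p₁ D' x) μ₁)
    (hint₂ : ∀ D D', adj D D' → ∀ x,
      Integrable (fun y => (p₂ D x y / p₂ D' x y) ^ α * p₂ D' x y) μ₂)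
    (hRDP₁ : ∀ D D', adj D D' →
      (α - 1)⁻¹ * Real.log (∫ x, (p₁ D x / p₁ D' x) ^ α * p₁ D' x ∂μ₁) ≤ γ₁)
    (hRDP₂ : ∀ D D', adj D D' → ∀ x,
      (α - 1)⁻¹ * Real.log (∫ y, (p₂ D x y / p₂ D' x y) ^ α * p₂ D' x y ∂μ₂) ≤ γ₂) :
    ∀ D D', adj D D' →
      (α - 1)⁻¹ * Real.log (∫ ω : Ω₁ × Ω₂,
          ((p₁ D ω.1 * p₂ D ω.1 ω.2) / (p₁ D' ω.1 * p₂ D' ω.1 ω.2)) ^ α *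
            (p₁ D' ω.1 * p₂ D' ω.1 ω.2) ∂(μ₁.prod μ₂)) ≤ γ₁ + γ₂ := by
  intro D D' hadj
  have hβ : 0 < α - 1 := by linarith
  set g : Ω₁ → ℝ := fun x => (p₁ D x / p₁ D' x) ^ α * p₁ D' x with hg
  set h : Ω₁ → Ω₂ → ℝ := fun x y => (p₂ D x y / p₂ D' x y) ^ α * p₂ D' x y with hh
  have hgpos : ∀ x, 0 < g x := fun x =>
    mul_pos (rpow_pos_of_pos (div_pos (hpos₁ D x) (hpos₁ D' x)) _) (hpos₁ D' x)
  have hhpos : ∀ x y, 0 < h x y := fun x y =>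
    mul_pos (rpow_pos_of_pos (div_pos (hpos₂ D x y) (hpos₂ D' x y)) _) (hpos₂ D' x y)
  have hgint : Integrable g μ₁ := hint₁ D D' hadj
  have hhint : ∀ x, Integrable (h x) μ₂ := hint₂ D D' hadj
  set C₁ : ℝ := Real.exp ((α - 1) * γ₁) with hC₁
  set C₂ : ℝ := Real.exp ((α - 1) * γ₂) with hC₂
  -- bounds on the two integrals from the RDP hypotheses
  have key : ∀ (I γ : ℝ), 0 ≤ I → (α - 1)⁻¹ * Real.log I ≤ γ →
      I ≤ Real.exp ((α - 1) * γ) := by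
    intro I γ hI0 hI
    rcases hI0.lt_or_eq with hp | hp
    · have hlog : Real.log I ≤ (α - 1) * γ := by
        have := mul_le_mul_of_nonneg_left hI hβ.le
        rwa [← mul_assoc, mul_inv_cancel₀ hβ.ne', one_mul] at this
      calc I = Real.exp (Real.log I) := (Real.exp_log hp).symm
        _ ≤ Real.exp ((α - 1) * γ) := Real.exp_le_exp.2 hlog
    · rw [← hp]; positivity
  have hI2le : ∀ x, ∫ y, h x y ∂μ₂ ≤ C₂ := fun x =>
    key _ _ (integral_nonneg fun y => (hhpos x y).le) (hRDP₂ D D' hadj x)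
  have hI1le : ∫ x, g x ∂μ₁ ≤ C₁ :=
    key _ _ (integral_nonneg fun x => (hgpos x).le) (hRDP₁ D D' hadj)
  -- pointwise factorization of the composed integrand
  have hfe : ∀ ω : Ω₁ × Ω₂,
      ((p₁ D ω.1 * p₂ D ω.1 ω.2) / (p₁ D' ω.1 * p₂ D' ω.1 ω.2)) ^ α *
        (p₁ D' ω.1 * p₂ D' ω.1 ω.2) = g ω.1 * h ω.1 ω.2 := by
    intro ω
    have h1 := hpos₁ D ω.1; have h2 := hpos₁ D' ω.1
    have h3 := hpos₂ D ω.1 ω.2; have h4 := hpos₂ D' ω.1 ω.2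
    rw [← div_mul_div_comm, Real.mul_rpow (by positivity) (by positivity), hg, hh]
    ring
  -- measurability
  have hgm : Measurable g :=
    (((hmeas₁ D).div (hmeas₁ D')).pow_const α).mul (hmeas₁ D')
  have hm2 : ∀ E, Measurable fun ω : Ω₁ × Ω₂ => p₂ E ω.1 ω.2 := fun E => hmeas₂ E
  have hhm : Measurable fun ω : Ω₁ × Ω₂ => h ω.1 ω.2 :=
    (((hm2 D).div (hm2 D')).pow_const α).mul (hm2 D')
  have hhmx : ∀ x, Measurable (h x) := fun x => by
    have : Measurable fun y : Ω₂ => p₂ D x y :=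
      (hmeas₂ D).comp measurable_prodMk_left
    have h' : Measurable fun y : Ω₂ => p₂ D' x y :=
      (hmeas₂ D').comp measurable_prodMk_left
    exact ((this.div h').pow_const α).mul h'
  have hFmeas : Measurable fun ω : Ω₁ × Ω₂ => g ω.1 * h ω.1 ω.2 :=
    (hgm.comp measurable_fst).mul hhm
  -- integrability on the product space
  have hFint : Integrable (fun ω : Ω₁ × Ω₂ => g ω.1 * h ω.1 ω.2) (μ₁.prod μ₂) := by
    refine ⟨hFmeas.aestronglyMeasurable, ?_⟩
    rw [hasFiniteIntegral_iff_norm]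
    have hmE : Measurable fun ω : Ω₁ × Ω₂ =>
        ENNReal.ofReal (g ω.1) * ENNReal.ofReal (h ω.1 ω.2) :=
      (ENNReal.measurable_ofReal.comp (hgm.comp measurable_fst)).mul
        (ENNReal.measurable_ofReal.comp hhm)
    calc ∫⁻ ω, ENNReal.ofReal ‖g ω.1 * h ω.1 ω.2‖ ∂(μ₁.prod μ₂)
        = ∫⁻ x, ∫⁻ y, ENNReal.ofReal (g x) * ENNReal.ofReal (h x y) ∂μ₂ ∂μ₁ := by
          rw [show (fun ω : Ω₁ × Ω₂ => ENNReal.ofReal ‖g ω.1 * h ω.1 ω.2‖)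
              = fun ω : Ω₁ × Ω₂ => ENNReal.ofReal (g ω.1) * ENNReal.ofReal (h ω.1 ω.2) from
            funext fun ω => by
              rw [Real.norm_eq_abs, abs_of_nonneg (mul_nonneg (hgpos ω.1).le (hhpos ω.1 ω.2).le),
                ENNReal.ofReal_mul (hgpos ω.1).le]]
          exact lintegral_prod _ hmE.aemeasurable
      _ ≤ ∫⁻ x, ENNReal.ofReal (g x) * ENNReal.ofReal C₂ ∂μ₁ := by
          refine lintegral_mono fun x => ?_
          rw [lintegral_const_mul _ (hhmx x).ennreal_ofReal]
          refine mul_le_mul_right ?_ _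
          rw [← ofReal_integral_eq_lintegral_ofReal (hhint x)
            (Filter.Eventually.of_forall fun y => (hhpos x y).le)]
          exact ENNReal.ofReal_le_ofReal (hI2le x)
      _ = (∫⁻ x, ENNReal.ofReal (g x) ∂μ₁) * ENNReal.ofReal C₂ :=
          lintegral_mul_const _ hgm.ennreal_ofReal
      _ = ENNReal.ofReal (∫ x, g x ∂μ₁) * ENNReal.ofReal C₂ := by
          rw [ofReal_integral_eq_lintegral_ofReal hgint
            (Filter.Eventually.of_forall fun x => (hgpos x).le)]
      _ < ⊤ := ENNReal.mul_lt_top ENNReal.ofReal_lt_top ENNReal.ofReal_lt_top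
  -- rewrite the goal integral
  have hIeq : (∫ ω : Ω₁ × Ω₂,
      ((p₁ D ω.1 * p₂ D ω.1 ω.2) / (p₁ D' ω.1 * p₂ D' ω.1 ω.2)) ^ α *
        (p₁ D' ω.1 * p₂ D' ω.1 ω.2) ∂(μ₁.prod μ₂))
      = ∫ ω : Ω₁ × Ω₂, g ω.1 * h ω.1 ω.2 ∂(μ₁.prod μ₂) :=
    integral_congr_ae (Filter.Eventually.of_forall hfe)
  rw [hIeq]
  set I : ℝ := ∫ ω : Ω₁ × Ω₂, g ω.1 * h ω.1 ω.2 ∂(μ₁.prod μ₂) with hI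
  -- upper bound on I
  have hIle : I ≤ C₁ * C₂ := by
    have hfub : I = ∫ x, g x * ∫ y, h x y ∂μ₂ ∂μ₁ := by
      rw [hI, integral_prod _ hFint]
      exact integral_congr_ae (Filter.Eventually.of_forall fun x => integral_const_mul (g x) (h x))
    rw [hfub]
    calc ∫ x, g x * ∫ y, h x y ∂μ₂ ∂μ₁ ≤ ∫ x, g x * C₂ ∂μ₁ := by
          refine integral_mono_of_nonneg
            (Filter.Eventually.of_forall fun x =>
              mul_nonneg (hgpos x).le (integral_nonneg fun y => (hhpos x y).le))
            (hgint.mul_const C₂)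
            (Filter.Eventually.of_forall fun x =>
              mul_le_mul_of_nonneg_left (hI2le x) (hgpos x).le)
      _ = (∫ x, g x ∂μ₁) * C₂ := integral_mul_const _ _
      _ ≤ C₁ * C₂ := mul_le_mul_of_nonneg_right hI1le (Real.exp_pos _).le
  -- positivity of I
  have hmu₁ : μ₁ Set.univ ≠ 0 := by
    intro h0
    have hz : μ₁ = 0 := Measure.measure_univ_eq_zero.mp h0
    have h1 := hnorm₁ D
    rw [hz, integral_zero_measure] at h1
    exact one_ne_zero h1.symm
  have hne1 : Nonempty Ω₁ := by
    by_contra hne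
    rw [not_nonempty_iff] at hne
    have h1 := hnorm₁ D
    rw [integral_of_isEmpty] at h1
    exact one_ne_zero h1.symm
  have hmu₂ : μ₂ Set.univ ≠ 0 := by
    intro h0
    have hz : μ₂ = 0 := Measure.measure_univ_eq_zero.mp h0
    have h1 := hnorm₂ D hne1.some
    rw [hz, integral_zero_measure] at h1
    exact one_ne_zero h1.symm
  have hF0 : 0 ≤ᵐ[μ₁.prod μ₂] fun ω : Ω₁ × Ω₂ => g ω.1 * h ω.1 ω.2 :=
    Filter.Eventually.of_forall fun ω => (mul_pos (hgpos ω.1) (hhpos ω.1 ω.2)).le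
  have hIpos : 0 < I := by
    rw [hI]
    refine (integral_pos_iff_support_of_nonneg_ae hF0 hFint).mpr ?_
    have hsupp : Function.support (fun ω : Ω₁ × Ω₂ => g ω.1 * h ω.1 ω.2) = Set.univ :=
      Set.eq_univ_iff_forall.mpr fun ω => (mul_pos (hgpos ω.1) (hhpos ω.1 ω.2)).ne'
    rw [hsupp, ← Set.univ_prod_univ, Measure.prod_prod]
    exact ENNReal.mul_pos hmu₁ hmu₂
  -- conclude
  have hlog : Real.log I ≤ (α - 1) * (γ₁ + γ₂) := by
    calc Real.log I ≤ Real.log (C₁ * C₂) :=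
          Real.log_le_log hIpos hIle
      _ = (α - 1) * (γ₁ + γ₂) := by
          rw [hC₁, hC₂, ← Real.exp_add, Real.log_exp]; ring
  calc (α - 1)⁻¹ * Real.log I ≤ (α - 1)⁻¹ * ((α - 1) * (γ₁ + γ₂)) := by
        exact mul_le_mul_of_nonneg_left hlog (by positivity)
    _ = γ₁ + γ₂ := by field_simp
end

section
/- Let X be a binomial random variable with parameters N̄ and q, and let N_B ≥ 1. Then the ratio c₀/c₁ of normalizing constants satisfies 1 + q·p(N_B−1; N, q)/(1 − P(N_B−1; N, q)) ≤ 1 + q·p(N_B−1; N̄, q)/(1 − P(N_B−1; N̄, q)) for all N ≥ N̄ whenever N_B ≤ qN̄, where p and P are the binomial pmf and cdf. Equivalently, the function N ↦ p(N_B−1; N, q)/(1 − P(N_B−1; N, q)) is non-increasing in N for N ≥ N_B/q. -/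
open Finset

/-- Binomial probability mass function `p(k; n, q)`. -/
noncomputable def binPMF (q : ℝ) (n k : ℕ) : ℝ := (n.choose k : ℝ) * q ^ k * (1 - q) ^ (n - k)

/-- Binomial cumulative distribution function `P(k; n, q)`. -/
noncomputable def binCDF (q : ℝ) (n k : ℕ) : ℝ := ∑ j ∈ Finset.range (k + 1), binPMF q n j

section Aux

variable {q : ℝ}

lemma binPMF_nonneg (hq0 : 0 < q) (hq1 : q < 1) (n k : ℕ) : 0 ≤ binPMF q n k := by
  unfold binPMF
  have h1 : (0:ℝ) ≤ 1 - q := by linarith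
  positivity

lemma binPMF_pos (hq0 : 0 < q) (hq1 : q < 1) {n k : ℕ} (h : k ≤ n) : 0 < binPMF q n k := by
  unfold binPMF
  have h1 : (0:ℝ) < 1 - q := by linarith
  have hc : 0 < n.choose k := Nat.choose_pos h
  have hc' : (0:ℝ) < (n.choose k : ℝ) := by exact_mod_cast hc
  positivity

lemma sum_binPMF (q : ℝ) (n : ℕ) : ∑ j ∈ Finset.range (n+1), binPMF q n j = 1 := by
  have h := add_pow q (1-q) n
  have h1 : q + (1 - q) = 1 := by ring
  rw [h1, one_pow] at h
  conv_rhs => rw [h]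
  apply Finset.sum_congr rfl
  intro j _
  unfold binPMF
  ring

lemma binPMF_succ_succ (q : ℝ) (n j : ℕ) :
    binPMF q (n+1) (j+1) = (1-q) * binPMF q n (j+1) + q * binPMF q n j := by
  unfold binPMF
  rcases lt_trichotomy (j+1) (n+1) with h | h | h
  · -- j + 1 ≤ n
    have hjn : j + 1 ≤ n := by omega
    rw [Nat.choose_succ_succ]
    have e1 : n + 1 - (j+1) = (n - (j+1)) + 1 := by omega
    have e2 : n - j = (n - (j+1)) + 1 := by omega
    rw [e1, e2]
    push_cast
    ring
  · -- j = n
    have hj : j = n := by omega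
    have hc1 : (n+1).choose (j+1) = 1 := by rw [hj, Nat.choose_self]
    have hc2 : n.choose (j+1) = 0 := Nat.choose_eq_zero_of_lt (by omega)
    have hc3 : n.choose j = 1 := by rw [hj, Nat.choose_self]
    have e1 : n + 1 - (j + 1) = 0 := by omega
    have e2 : n - j = 0 := by omega
    rw [hc1, hc2, hc3, e1, e2]
    push_cast
    ring
  · -- j + 1 > n + 1
    have h1 : (n+1).choose (j+1) = 0 := Nat.choose_eq_zero_of_lt (by omega)
    have h2 : n.choose (j+1) = 0 := Nat.choose_eq_zero_of_lt (by omega)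
    have h3 : n.choose j = 0 := Nat.choose_eq_zero_of_lt (by omega)
    rw [h1, h2, h3]
    simp

lemma binCDF_succ (q : ℝ) (n k : ℕ) :
    binCDF q (n+1) k = binCDF q n k - q * binPMF q n k := by
  induction k with
  | zero =>
      unfold binCDF
      rw [Finset.sum_range_one, Finset.sum_range_one]
      unfold binPMF
      simp only [Nat.choose_zero_right, Nat.cast_one, pow_zero, Nat.sub_zero]
      ring
  | succ k ih =>
      simp only [binCDF] at ih ⊢
      rw [Finset.sum_range_succ, Finset.sum_range_succ (n := k+1), ih, binPMF_succ_succ]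
      ring

lemma tail_eq (q : ℝ) {n k : ℕ} (h : k ≤ n) :
    1 - binCDF q n k = ∑ j ∈ Finset.Ico (k+1) (n+1), binPMF q n j := by
  have hsum := sum_binPMF q n
  have hsplit : ∑ j ∈ Finset.range (k+1), binPMF q n j
      + ∑ j ∈ Finset.Ico (k+1) (n+1), binPMF q n j
      = ∑ j ∈ Finset.range (n+1), binPMF q n j := by
    simp only [Finset.range_eq_Ico]
    exact Finset.sum_Ico_consecutive (binPMF q n) (by omega : 0 ≤ k+1) (by omega : k+1 ≤ n+1)
  unfold binCDF
  linarith

lemma tail_pos (hq0 : 0 < q) (hq1 : q < 1) {n k : ℕ} (h : k < n) :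
    0 < 1 - binCDF q n k := by
  rw [tail_eq q h.le]
  apply Finset.sum_pos
  · intro j hj
    rw [Finset.mem_Ico] at hj
    exact binPMF_pos hq0 hq1 (by omega)
  · exact ⟨k+1, by rw [Finset.mem_Ico]; omega⟩

lemma binPMF_mono (hq0 : 0 < q) (hq1 : q < 1) {n m : ℕ} (h : (m:ℝ) + 2 ≤ q * n) :
    binPMF q n m ≤ binPMF q n (m+1) := by
  have hn0 : (0:ℝ) < n := by nlinarith [Nat.cast_nonneg (α := ℝ) m]
  have hqn : q * n < n := by nlinarith
  have hmn : (m:ℝ) + 2 < n := by linarith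
  have hmnn : m + 2 ≤ n := by exact_mod_cast (by exact_mod_cast hmn : ((m + 2 : ℕ):ℝ) < (n:ℝ)).le
  have hmn1 : m + 1 ≤ n := by omega
  have hmle : m ≤ n := by omega
  -- key choose identity
  have hc' := Nat.choose_succ_right_eq n m
  have hc : (n.choose (m+1) : ℝ) * (m+1) = (n.choose m : ℝ) * ((n - m : ℕ) : ℝ) := by
    exact_mod_cast hc'
  rw [Nat.cast_sub hmle] at hc
  have hcm : (0:ℝ) < (n.choose m : ℝ) := by exact_mod_cast Nat.choose_pos hmle
  have key : (n.choose m : ℝ) * (1 - q) ≤ (n.choose (m+1) : ℝ) * q := by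
    have hm1 : (0:ℝ) < (m:ℝ) + 1 := by positivity
    rw [← mul_le_mul_iff_of_pos_right hm1]
    have : (n.choose (m+1) : ℝ) * q * ((m:ℝ)+1) = (n.choose m : ℝ) * ((n:ℝ) - m) * q := by
      nlinarith [hc]
    rw [this]
    nlinarith
  -- assemble
  unfold binPMF
  have e : n - m = (n - (m+1)) + 1 := by omega
  rw [e]
  have hb : (0:ℝ) ≤ q ^ m * (1-q) ^ (n - (m+1)) := by
    have : (0:ℝ) ≤ 1 - q := by linarith
    positivity
  calc (n.choose m : ℝ) * q ^ m * (1-q) ^ ((n - (m+1)) + 1)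
      = ((n.choose m : ℝ) * (1 - q)) * (q ^ m * (1-q) ^ (n - (m+1))) := by ring
    _ ≤ ((n.choose (m+1) : ℝ) * q) * (q ^ m * (1-q) ^ (n - (m+1))) :=
        mul_le_mul_of_nonneg_right key hb
    _ = (n.choose (m+1) : ℝ) * q ^ (m+1) * (1-q) ^ (n - (m+1)) := by ring

lemma ratio_step (hq0 : 0 < q) (hq1 : q < 1) {NB n : ℕ} (hNB : 1 ≤ NB)
    (h : (NB:ℝ) ≤ q * n) :
    binPMF q (n+1) (NB-1) / (1 - binCDF q (n+1) (NB-1)) ≤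
      binPMF q n (NB-1) / (1 - binCDF q n (NB-1)) := by
  set k := NB - 1 with hk
  have hn0 : (0:ℝ) < n := by
    have : (1:ℝ) ≤ (NB:ℝ) := by exact_mod_cast hNB
    nlinarith
  have hNBn : (NB:ℝ) < n := by nlinarith
  have hNBn' : NB < n := by exact_mod_cast hNBn
  have hkn : k < n := by omega
  have hT : 0 < 1 - binCDF q n k := tail_pos hq0 hq1 hkn
  have hp : 0 < binPMF q n k := binPMF_pos hq0 hq1 (by omega)
  have hT' : 1 - binCDF q (n+1) k = (1 - binCDF q n k) + q * binPMF q n k := by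
    rw [binCDF_succ]; ring
  have hTpos' : 0 < 1 - binCDF q (n+1) k := by
    rw [hT']; positivity
  rw [div_le_div_iff₀ hTpos' hT]
  rw [hT']
  -- p' * T ≤ p * (T + q p)
  rcases Nat.eq_zero_or_pos k with hk0 | hkpos
  · -- k = 0
    rw [hk0]
    have hp0 : binPMF q (n+1) 0 = (1 - q) * binPMF q n 0 := by
      unfold binPMF
      simp only [Nat.choose_zero_right, Nat.cast_one, pow_zero, Nat.sub_zero]
      ring
    rw [hp0]
    rw [hk0] at hT hp
    nlinarith [mul_pos (mul_pos hq0 hp) hT, mul_pos (mul_pos hq0 hp) hp]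
  · -- k = m + 1
    obtain ⟨m, hm⟩ : ∃ m, k = m + 1 := ⟨k - 1, by omega⟩
    rw [hm]
    rw [binPMF_succ_succ]
    have hmono : binPMF q n m ≤ binPMF q n (m+1) := by
      apply binPMF_mono hq0 hq1
      have : ((m:ℝ) + 2) ≤ (NB:ℝ) := by
        have : m + 2 ≤ NB := by omega
        exact_mod_cast this
      linarith
    rw [hm] at hT hp
    nlinarith [mul_le_mul_of_nonneg_right hmono hT.le,
      mul_pos (mul_pos hq0 hp) hp]

end Aux

/-- The rejection-impairment ratio `p(N_B−1; N, q)/(1 − P(N_B−1; N, q))` is non-increasing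
in the dataset size `N` for `N ≥ N_B/q`; in particular, whenever `N_B ≤ qN̄`, for all
`N ≥ N̄` we have
`1 + q·p(N_B−1; N, q)/(1 − P(N_B−1; N, q)) ≤ 1 + q·p(N_B−1; N̄, q)/(1 − P(N_B−1; N̄, q))`. -/
theorem binom_rejection_ratio_antitone (q : ℝ) (hq0 : 0 < q) (hq1 : q < 1)
    (NB Nbar : ℕ) (hNB : 1 ≤ NB) (hNBq : (NB : ℝ) ≤ q * Nbar) :
    (∀ N : ℕ, Nbar ≤ N →
      1 + q * binPMF q N (NB - 1) / (1 - binCDF q N (NB - 1)) ≤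
        1 + q * binPMF q Nbar (NB - 1) / (1 - binCDF q Nbar (NB - 1))) ∧
    (∀ N M : ℕ, (NB : ℝ) ≤ q * N → N ≤ M →
      binPMF q M (NB - 1) / (1 - binCDF q M (NB - 1)) ≤
        binPMF q N (NB - 1) / (1 - binCDF q N (NB - 1))) := by
  have part2 : ∀ N M : ℕ, (NB : ℝ) ≤ q * N → N ≤ M →
      binPMF q M (NB - 1) / (1 - binCDF q M (NB - 1)) ≤
        binPMF q N (NB - 1) / (1 - binCDF q N (NB - 1)) := by
    intro N M hN hNM
    induction M, hNM using Nat.le_induction with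
    | base => exact le_rfl
    | succ m hm ih =>
        have hqm : (NB:ℝ) ≤ q * m := by
          have : (N:ℝ) ≤ (m:ℝ) := by exact_mod_cast hm
          nlinarith
        exact le_trans (ratio_step hq0 hq1 hNB hqm) ih
  refine ⟨fun N hN => ?_, part2⟩
  have h2 := part2 Nbar N hNBq hN
  calc 1 + q * binPMF q N (NB-1) / (1 - binCDF q N (NB-1))
      = 1 + q * (binPMF q N (NB-1) / (1 - binCDF q N (NB-1))) := by ring
    _ ≤ 1 + q * (binPMF q Nbar (NB-1) / (1 - binCDF q Nbar (NB-1))) := by nlinarith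
    _ = 1 + q * binPMF q Nbar (NB-1) / (1 - binCDF q Nbar (NB-1)) := by ring
end
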